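/- Every imprecise minimum S of an imprecise terrain contains a proxy, that is, a node p ∈ S such that there exist no realization R and node q ∉ S with p ⇝_R q. In fact, any node s ∈ S with high(s) < min_{t∈N(S)} low(t) is a proxy. -/

import Mathlib

open scoped Classical
open Set

/-- An imprecise terrain: a finite geometric graph with nodes in the plane,
each node carrying an elevation interval `[low v, high v]`. -/
structure ImpTerrain (V : Type) [Fintype V] [DecidableEq V] where
  pos : V → ℝ × ℝ
  posInj : Function.Injective pos
  adj : V → V → Prop
  adj_symm : ∀ u v, adj u v → adj v u
  adj_irrefl : ∀ v, ¬ adj v v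
  low : V → ℝ
  high : V → ℝ

namespace ImpTerrain

variable {V : Type} [Fintype V] [DecidableEq V]

/-- A realization assigns to each node an elevation within its interval. -/
def IsRealization (T : ImpTerrain V) (R : V → ℝ) : Prop :=
  ∀ v, T.low v ≤ R v ∧ R v ≤ T.high v

/-- Horizontal (plane) distance between two nodes. -/
noncomputable def hdist (T : ImpTerrain V) (u v : V) : ℝ := dist (T.pos u) (T.pos v)

/-- Slope (steepness of descent) of the edge from `p` to `q` in realization `R`. -/
noncomputable def slope (T : ImpTerrain V) (R : V → ℝ) (p q : V) : ℝ :=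
  (R p - R q) / T.hdist p q

/-- `q` is a steepest-descent neighbor of `p` in `R`. -/
def SDN (T : ImpTerrain V) (R : V → ℝ) (p q : V) : Prop :=
  T.adj p q ∧ 0 ≤ T.slope R p q ∧ ∀ r, T.adj p r → T.slope R p r ≤ T.slope R p q

/-- The neighborhood of a set of nodes. -/
def Nbhd (T : ImpTerrain V) (P : Set V) : Set V :=
  {s | s ∉ P ∧ ∃ t ∈ P, T.adj s t}

/-- `u` and `v` are connected by a path staying inside `P`. -/
def ConnIn (T : ImpTerrain V) (P : Set V) (u v : V) : Prop :=
  Relation.ReflTransGen (fun a b => T.adj a b ∧ a ∈ P ∧ b ∈ P) u v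

/-- `P` is a local minimum in realization `R`: nonempty, connected, all nodes at
the same elevation, strictly below its neighborhood. -/
def LocalMin (T : ImpTerrain V) (R : V → ℝ) (P : Set V) : Prop :=
  P.Nonempty ∧ (∀ u ∈ P, ∀ v ∈ P, T.ConnIn P u v) ∧
    (∀ u ∈ P, ∀ v ∈ P, R u = R v) ∧ (∀ u ∈ P, ∀ t ∈ T.Nbhd P, R u < R t)

def InLocalMin (T : ImpTerrain V) (R : V → ℝ) (p : V) : Prop :=
  ∃ P, T.LocalMin R P ∧ p ∈ P

/-- One step of discrete water flow. -/
def FlowStep (T : ImpTerrain V) (R : V → ℝ) (p q : V) : Prop :=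
  (∃ P, T.LocalMin R P ∧ p ∈ P ∧ q ∈ P ∧ T.adj p q) ∨
    (¬ T.InLocalMin R p ∧ T.SDN R p q)

/-- `p ⇝_R q` : water from `p` reaches `q` in realization `R`. -/
def FlowsTo (T : ImpTerrain V) (R : V → ℝ) : V → V → Prop :=
  Relation.ReflTransGen (T.FlowStep R)

/-- The (discrete) watershed of a set of nodes `Q` in realization `R`. -/
def WS (T : ImpTerrain V) (R : V → ℝ) (Q : Set V) : Set V :=
  {p | ∃ q ∈ Q, T.FlowsTo R p q}

/-- The potential watershed of `Q`. -/
def PoWS (T : ImpTerrain V) (Q : Set V) : Set V :=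
  {p | ∃ R, T.IsRealization R ∧ p ∈ T.WS R Q}

/-- A flow path: a simple path following steepest-descent edges that ends in,
and visits all nodes of, a local minimum. -/
def IsFlowPath (T : ImpTerrain V) (R : V → ℝ) (L : List V) : Prop :=
  L.Nodup ∧ L.Chain' (fun p q => T.SDN R p q) ∧
    ∃ P, T.LocalMin R P ∧ (∀ v ∈ P, v ∈ L) ∧ ∃ hne : L ≠ [], L.getLast hne ∈ P

/-- The `Q`-avoiding potential watershed of `S`: nodes having, in some
realization, a flow path to a node of `S` whose portion up to that node
avoids `Q`. -/
def AvWS (T : ImpTerrain V) (Q S : Set V) : Set V :=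
  {p | ∃ R, T.IsRealization R ∧ ∃ L, T.IsFlowPath R L ∧ ∃ s ∈ S,
    ∃ i j : Fin L.length, (i : ℕ) ≤ (j : ℕ) ∧ L.get i = p ∧ L.get j = s ∧
      ∀ k : Fin L.length, (i : ℕ) ≤ (k : ℕ) → (k : ℕ) ≤ (j : ℕ) → L.get k ∉ Q}

/-- The persistent watershed of `Q`. -/
def PsWS (T : ImpTerrain V) (Q : Set V) : Set V :=
  (T.AvWS Q (T.PoWS Q)ᶜ)ᶜ

/-- The core watershed of `Q`: nodes from which every induced flow path leads
to a node of `Q`. -/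
def CoWS (T : ImpTerrain V) (Q : Set V) : Set V :=
  {p | ∀ R, T.IsRealization R → ∀ L, T.IsFlowPath R L →
    ∀ i : Fin L.length, L.get i = p →
      ∃ q ∈ Q, ∃ j : Fin L.length, (i : ℕ) ≤ (j : ℕ) ∧ L.get j = q}

/-- Union of all node sets disjoint from `Q` that form a local minimum in some
realization. -/
def Vmin (T : ImpTerrain V) (Q : Set V) : Set V :=
  ⋃₀ {r | r ∩ Q = ∅ ∧ ∃ R, T.IsRealization R ∧ T.LocalMin R r}

/-- `S` contains a local minimum in every realization. -/
def AlwaysMin (T : ImpTerrain V) (S : Set V) : Prop :=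
  ∀ R, T.IsRealization R → ∃ P, T.LocalMin R P ∧ P ⊆ S

/-- An imprecise minimum: a minimal set containing a local minimum in every
realization. -/
def ImpreciseMin (T : ImpTerrain V) (S : Set V) : Prop :=
  T.AlwaysMin S ∧ ∀ S', S' ⊂ S → ¬ T.AlwaysMin S'

/-- A terrain is regular if every local minimum of the lowermost realization is
an imprecise minimum. -/
def Regular (T : ImpTerrain V) : Prop :=
  ∀ P, T.LocalMin T.low P → T.ImpreciseMin P

/-- A proxy of `S`: a node of `S` from which water can never reach a node
outside `S` in any realization. -/
def IsProxy (T : ImpTerrain V) (S : Set V) (p : V) : Prop :=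
  p ∈ S ∧ ∀ R, T.IsRealization R → ∀ q, q ∉ S → ¬ T.FlowsTo R p q

/-- `R'` is an `ε`-perturbation of `R`. -/
def Perturb (ε : ℝ) (R R' : V → ℝ) : Prop := ∀ v, |R' v - R v| ≤ ε

/-- `S` together with all `ε`-perturbations of its members (`S^ε`). -/
def Enlarge (S : Set (V → ℝ)) (ε : ℝ) : Set (V → ℝ) :=
  S ∪ {R' | ∃ R ∈ S, Perturb ε R R'}

/-- `Π(S)` : flow paths induced by realizations in `S`. -/
def FlowPathsOf (T : ImpTerrain V) (S : Set (V → ℝ)) : Set (List V) :=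
  {L | ∃ R ∈ S, T.IsFlowPath R L}

/-- A flow path is stable with respect to `S`. -/
def StableWrt (T : ImpTerrain V) (S : Set (V → ℝ)) (L : List V) : Prop :=
  ∃ ε > (0 : ℝ), ∃ R ∈ S, ∀ R', Perturb ε R R' → T.IsFlowPath R' L

/-- State of the sweep-plane minimum-removal algorithm. -/
structure SweepState (V : Type) where
  discovered : Set V
  final : V → Option ℝ
  proxies : Set V

def pendingS (st : SweepState V) (v : V) : Prop :=
  v ∈ st.discovered ∧ st.final v = none

/-- Pending component of `v`. -/
def pendComp (T : ImpTerrain V) (st : SweepState V) (v : V) : Set V :=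
  {u | Relation.ReflTransGen (fun a b => T.adj a b ∧ pendingS st a ∧ pendingS st b) v u}

/-- One step of the sweep algorithm, processing a `low` event `(v, false)` or a
`high` event `(v, true)`. -/
noncomputable def sweepStep (T : ImpTerrain V) (st : SweepState V) : V × Bool → SweepState V
  | (v, false) =>
    let st1 : SweepState V := ⟨insert v st.discovered, st.final, st.proxies⟩
    if ∃ u, T.adj v u ∧ (st.final u).isSome = true then
      ⟨st1.discovered,
        fun w => if w ∈ T.pendComp st1 v then some (T.low v) else st.final w,
        st.proxies⟩
    else st1
  | (v, true) =>
    if (st.final v).isSome = true then st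
    else
      ⟨st.discovered,
        fun w =>
          if w ∈ T.pendComp st v then some (sSup (T.low '' T.pendComp st v))
          else st.final w,
        insert v st.proxies⟩

noncomputable def sweepRun (T : ImpTerrain V) (evs : List (V × Bool)) : SweepState V :=
  evs.foldl T.sweepStep ⟨∅, fun _ => none, ∅⟩

/-- Elevation key of an event. -/
def eKey (T : ImpTerrain V) : V × Bool → ℝ
  | (v, false) => T.low v
  | (v, true) => T.high v

/-- A valid event list: all events, each once, sorted by elevation with low
events before high events at equal elevation. -/
def ValidEventList (T : ImpTerrain V) (evs : List (V × Bool)) : Prop :=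
  (∀ v : V, ∀ b : Bool, (v, b) ∈ evs) ∧ evs.Nodup ∧
    evs.Pairwise (fun e1 e2 =>
      T.eKey e1 < T.eKey e2 ∨ (T.eKey e1 = T.eKey e2 ∧ ¬(e1.2 = true ∧ e2.2 = false)))

/-- The realization `M` computed by the sweep algorithm. -/
noncomputable def sweepM (T : ImpTerrain V) (evs : List (V × Bool)) : V → ℝ :=
  fun v => ((T.sweepRun evs).final v).getD (T.high v)

end ImpTerrain

namespace StmtAux

variable {V : Type} [Fintype V] [DecidableEq V]

lemma rtg_symm {α : Type*} {r : α → α → Prop} (h : Symmetric r) {a b : α}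
    (hab : Relation.ReflTransGen r a b) : Relation.ReflTransGen r b a := by
  induction hab with
  | refl => exact Relation.ReflTransGen.refl
  | tail _ hbc ih =>
      exact Relation.ReflTransGen.trans (Relation.ReflTransGen.single (h hbc)) ih

/-- Reachability along edges whose target has `low ≤ c`. -/
abbrev ReachLE (T : ImpTerrain V) (c : ℝ) (v u : V) : Prop :=
  Relation.ReflTransGen (fun a b => T.adj a b ∧ T.low b ≤ c) v u

/-- Reachability along edges whose target has `low < φ`. -/
abbrev ReachLT (T : ImpTerrain V) (φ : ℝ) (v u : V) : Prop :=
  Relation.ReflTransGen (fun a b => T.adj a b ∧ T.low b < φ) v u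

/-- Candidate escape levels of `v`: values `c` in the (finite) image of `low`
such that `v` can escape `S` through nodes of `low ≤ c`. -/
noncomputable def escSet (T : ImpTerrain V) (S : Set V) (v : V) : Finset ℝ :=
  (Finset.univ.image T.low).filter
    (fun c => T.low v ≤ c ∧ ∃ u, u ∉ S ∧ ReachLE T c v u)

/-- The minimal escape level of `v` (junk value if no escape exists). -/
noncomputable def fEsc (T : ImpTerrain V) (S : Set V) (v : V) : ℝ :=
  if h : (escSet T S v).Nonempty then (escSet T S v).min' h else T.low v

lemma escSet_aux (T : ImpTerrain V) (S : Set V) {v : V} {c : ℝ} (hlow : T.low v ≤ c)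
    (h : ∃ u, u ∉ S ∧ ReachLE T c v u) : ∃ c₀ ∈ escSet T S v, c₀ ≤ c := by
  classical
  obtain ⟨u, huS, hr⟩ := h
  have hvF : T.low v ∈ (Finset.univ.image T.low).filter (fun x => x ≤ c) :=
    Finset.mem_filter.mpr ⟨Finset.mem_image_of_mem _ (Finset.mem_univ v), hlow⟩
  have hne : ((Finset.univ.image T.low).filter (fun x => x ≤ c)).Nonempty := ⟨_, hvF⟩
  refine ⟨((Finset.univ.image T.low).filter (fun x => x ≤ c)).max' hne, ?_, ?_⟩
  · refine Finset.mem_filter.mpr ⟨?_, ?_, u, huS, ?_⟩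
    · exact (Finset.mem_filter.mp (Finset.max'_mem _ hne)).1
    · exact Finset.le_max' _ _ hvF
    · refine Relation.ReflTransGen.mono (fun a b hab => ⟨hab.1, ?_⟩) _ _ hr
      exact Finset.le_max' ((Finset.univ.image T.low).filter (fun x => x ≤ c)) _
        (Finset.mem_filter.mpr ⟨Finset.mem_image_of_mem T.low (Finset.mem_univ b), hab.2⟩)
  · exact Finset.max'_le _ _ _ (fun x hx => (Finset.mem_filter.mp hx).2)

lemma fEsc_mem (T : ImpTerrain V) (S : Set V) {v : V} (h : (escSet T S v).Nonempty) :
    T.low v ≤ fEsc T S v ∧ ∃ u, u ∉ S ∧ ReachLE T (fEsc T S v) v u := by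
  have heq : fEsc T S v = (escSet T S v).min' h := dif_pos h
  have hm := (escSet T S v).min'_mem h
  rw [← heq] at hm
  exact (Finset.mem_filter.mp hm).2

lemma fEsc_le (T : ImpTerrain V) (S : Set V) {v : V} {c : ℝ} (hlow : T.low v ≤ c)
    (h : ∃ u, u ∉ S ∧ ReachLE T c v u) : fEsc T S v ≤ c := by
  obtain ⟨c₀, hc₀mem, hc₀c⟩ := escSet_aux T S hlow h
  have hne : (escSet T S v).Nonempty := ⟨c₀, hc₀mem⟩
  have heq : fEsc T S v = (escSet T S v).min' hne := dif_pos hne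
  rw [heq]
  exact le_trans (Finset.min'_le _ _ hc₀mem) hc₀c

/-- If `S` always contains a local minimum, then some node `v` has a level
`φ > high v` below which it cannot escape `S`. -/
lemma exists_safe (T : ImpTerrain V) (hle : ∀ v, T.low v ≤ T.high v) (S : Set V)
    (hAM : T.AlwaysMin S) :
    ∃ v φ, T.high v < φ ∧ ∀ u, ReachLT T φ v u → u ∈ S := by
  by_contra hcon
  push_neg at hcon
  -- every node escapes below any level above its `high`
  have hW : ∀ v : V, ∃ u, u ∉ S ∧ ReachLE T (T.high v) v u := by
    intro v
    set F := (Finset.univ.image T.low).filter (fun c => T.high v < c) with hF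
    set φv := if h : F.Nonempty then F.min' h else T.high v + 1 with hφv
    have hφv1 : T.high v < φv := by
      by_cases h : F.Nonempty
      · rw [hφv, dif_pos h]; exact (Finset.mem_filter.mp (F.min'_mem h)).2
      · rw [hφv, dif_neg h]; linarith
    have hφv2 : ∀ b : V, T.low b < φv → T.low b ≤ T.high v := by
      intro b hb
      by_contra hhb
      have hbF : T.low b ∈ F := Finset.mem_filter.mpr
        ⟨Finset.mem_image_of_mem _ (Finset.mem_univ b), lt_of_not_ge hhb⟩
      have hne : F.Nonempty := ⟨_, hbF⟩
      rw [hφv, dif_pos hne] at hb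
      exact absurd (F.min'_le _ hbF) (not_le.mpr hb)
    obtain ⟨u, hru, huS⟩ := hcon v φv hφv1
    exact ⟨u, huS, Relation.ReflTransGen.mono (fun a b hab => ⟨hab.1, hφv2 b hab.2⟩) _ _ hru⟩
  have hne : ∀ v : V, (escSet T S v).Nonempty := by
    intro v
    obtain ⟨u, huS, hr⟩ := hW v
    obtain ⟨c₀, hc₀, _⟩ := escSet_aux T S (hle v) ⟨u, huS, hr⟩
    exact ⟨c₀, hc₀⟩
  set R : V → ℝ := fun w => if w ∈ S then fEsc T S w else T.low w with hRdef
  have hR : T.IsRealization R := by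
    intro w
    by_cases hw : w ∈ S
    · have h1 := fEsc_mem T S (hne w)
      have h2 : fEsc T S w ≤ T.high w := fEsc_le T S (hle w) (hW w)
      simp only [hRdef, if_pos hw]
      exact ⟨h1.1, h2⟩
    · simp only [hRdef, if_neg hw]
      exact ⟨le_refl _, hle w⟩
  obtain ⟨Q, hQ, hQS⟩ := hAM R hR
  obtain ⟨v₀, hv₀⟩ := hQ.1
  have hv₀S : v₀ ∈ S := hQS hv₀
  set η := fEsc T S v₀ with hη
  have hRv₀ : R v₀ = η := by simp only [hRdef, if_pos hv₀S, hη]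
  obtain ⟨hlow₀, u, huS, hreach⟩ := fEsc_mem T S (hne v₀)
  have walk : ∀ a, ReachLE T η a u → a ∈ Q → False := by
    intro a ha
    induction ha using Relation.ReflTransGen.head_induction_on with
    | refl => intro h; exact huS (hQS h)
    | @head a c h' hrest ih =>
      intro haQ
      by_cases hcQ : c ∈ Q
      · exact ih hcQ
      · have hcN : c ∈ T.Nbhd Q := ⟨hcQ, a, haQ, T.adj_symm a c h'.1⟩
        have hlt := hQ.2.2.2 a haQ c hcN
        have haη : R a = η := by rw [hQ.2.2.1 a haQ v₀ hv₀, hRv₀]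
        have hcη : R c ≤ η := by
          by_cases hcS : c ∈ S
          · have hc : R c = fEsc T S c := by simp only [hRdef, if_pos hcS]
            rw [hc]
            exact fEsc_le T S h'.2 ⟨u, huS, hrest⟩
          · have hc : R c = T.low c := by simp only [hRdef, if_neg hcS]
            rw [hc]; exact h'.2
        rw [haη] at hlt
        linarith
  exact walk v₀ hreach hv₀

/-- Every imprecise minimum contains a node strictly below the whole
neighborhood of `S`. -/
lemma main_exists (T : ImpTerrain V) (hle : ∀ v, T.low v ≤ T.high v) (S : Set V)
    (hS : T.ImpreciseMin S) :
    ∃ v ∈ S, ∀ t ∈ T.Nbhd S, T.high v < T.low t := by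
  obtain ⟨v, φ, hvφ, hsafe⟩ := exists_safe T hle S hS.1
  set A : Set V := {u | ReachLT T φ v u} with hA
  have hAS : A ⊆ S := fun u hu => hsafe u hu
  have hvA : v ∈ A := Relation.ReflTransGen.refl
  have hAM : T.AlwaysMin A := by
    intro R hR
    set AR : Finset V := Finset.univ.filter (fun u => u ∈ A ∧ R u < φ) with hAR
    have hvAR : v ∈ AR :=
      Finset.mem_filter.mpr ⟨Finset.mem_univ v, hvA, lt_of_le_of_lt (hR v).2 hvφ⟩
    obtain ⟨u₀, hu₀AR, hmin⟩ := Finset.exists_min_image AR R ⟨v, hvAR⟩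
    obtain ⟨-, hu₀A, hu₀φ⟩ := Finset.mem_filter.mp hu₀AR
    set μ := R u₀ with hμ
    set stp : V → V → Prop := fun a b => T.adj a b ∧ b ∈ A ∧ R b = μ with hstp
    set C : Set V := {x | Relation.ReflTransGen stp u₀ x} with hC
    have hCsub : ∀ x ∈ C, x ∈ A ∧ R x = μ := by
      intro x hx
      simp only [hC, Set.mem_setOf_eq] at hx
      induction hx with
      | refl => exact ⟨hu₀A, rfl⟩
      | tail _ hbc _ => exact ⟨hbc.2.1, hbc.2.2⟩
    have hu₀C : u₀ ∈ C := Relation.ReflTransGen.refl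
    have htoC : ∀ x ∈ C, Relation.ReflTransGen (fun a b => T.adj a b ∧ a ∈ C ∧ b ∈ C) u₀ x := by
      intro x hx
      simp only [hC, Set.mem_setOf_eq] at hx
      induction hx with
      | refl => exact Relation.ReflTransGen.refl
      | @tail b c hab hbc ih =>
        exact Relation.ReflTransGen.tail ih ⟨hbc.1, hab, Relation.ReflTransGen.tail hab hbc⟩
    refine ⟨C, ⟨⟨u₀, hu₀C⟩, ?_, ?_, ?_⟩, fun x hx => (hCsub x hx).1⟩
    · intro x hx y hy
      have hsymm : Symmetric (fun a b => T.adj a b ∧ a ∈ C ∧ b ∈ C) :=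
        fun a b h => ⟨T.adj_symm a b h.1, h.2.2, h.2.1⟩
      exact Relation.ReflTransGen.trans (rtg_symm hsymm (htoC x hx)) (htoC y hy)
    · intro a ha b hb
      rw [(hCsub a ha).2, (hCsub b hb).2]
    · intro x hx t ht
      rw [(hCsub x hx).2]
      obtain ⟨htC, q, hqC, hadj⟩ := ht
      by_cases htA : t ∈ A
      · by_cases htφ : R t < φ
        · have htAR : t ∈ AR := Finset.mem_filter.mpr ⟨Finset.mem_univ t, htA, htφ⟩
          rcases eq_or_lt_of_le (hmin t htAR) with heq | hlt
          · exact absurd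
              (Relation.ReflTransGen.tail (show Relation.ReflTransGen stp u₀ q from hqC)
                ⟨T.adj_symm t q hadj, htA, heq.symm⟩) htC
          · exact hlt
        · exact lt_of_lt_of_le hu₀φ (not_lt.mp htφ)
      · have hqA : q ∈ A := (hCsub q hqC).1
        have hlt : ¬ T.low t < φ := fun hl =>
          htA (Relation.ReflTransGen.tail hqA ⟨T.adj_symm t q hadj, hl⟩)
        exact lt_of_lt_of_le hu₀φ (le_trans (not_lt.mp hlt) (hR t).1)
  have hnot : ¬ A ⊂ S := fun h => hS.2 A h hAM
  have hAeq : A = S := by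
    by_contra hne
    exact hnot (HasSubset.Subset.ssubset_of_ne hAS hne)
  refine ⟨v, hAS hvA, ?_⟩
  intro t ht
  obtain ⟨htS, s', hs'S, hadj⟩ := ht
  have hs'A : s' ∈ A := by rw [hAeq]; exact hs'S
  by_contra hcon2
  push_neg at hcon2
  have hlt : T.low t < φ := lt_of_le_of_lt hcon2 hvφ
  exact htS (hAS (Relation.ReflTransGen.tail hs'A ⟨T.adj_symm t s' hadj, hlt⟩))

/-- The flow invariant: from a node strictly below all of `N(S)`, water can
never leave `S`. -/
lemma proxy_of (T : ImpTerrain V) (S : Set V) (s : V) (hs : s ∈ S)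
    (hcond : ∀ t ∈ T.Nbhd S, T.high s < T.low t) : T.IsProxy S s := by
  refine ⟨hs, fun R hR q hq hflow => ?_⟩
  have inv : ∀ x, T.FlowsTo R s x → x ∈ S ∧ R x ≤ T.high s := by
    intro x h
    induction h with
    | refl => exact ⟨hs, (hR s).2⟩
    | @tail b c _ hstep ih =>
      obtain ⟨hbS, hble⟩ := ih
      rcases hstep with ⟨P, hP, hbP, hcP, hadj⟩ | ⟨-, hadj, hslope, -⟩
      · have hRc : R c = R b := hP.2.2.1 _ hcP _ hbP
        constructor
        · by_contra hcS
          have hcN : c ∈ T.Nbhd S := ⟨hcS, b, hbS, T.adj_symm b c hadj⟩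
          have h1 := hcond c hcN
          have h2 := (hR c).1
          linarith
        · rw [hRc]; exact hble
      · have hbc : b ≠ c := fun h => T.adj_irrefl c (h ▸ hadj)
        have hpos : 0 < T.hdist b c := by
          rw [ImpTerrain.hdist]
          exact dist_pos.mpr (fun h => hbc (T.posInj h))
        have hRcb : R c ≤ R b := by
          rw [ImpTerrain.slope] at hslope
          rcases div_nonneg_iff.mp hslope with ⟨h1, _⟩ | ⟨_, h2⟩
          · linarith
          · linarith
        constructor
        · by_contra hcS
          have hcN : c ∈ T.Nbhd S := ⟨hcS, b, hbS, T.adj_symm b c hadj⟩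
          have h1 := hcond c hcN
          have h2 := (hR c).1
          linarith
        · linarith
  exact hq (inv q hflow).1

end StmtAux

/-- Every imprecise minimum contains a proxy; in fact any `s ∈ S` with
`high s < min_{t ∈ N(S)} low t` is a proxy of `S`. -/
theorem stmt3 {V : Type} [Fintype V] [DecidableEq V] (T : ImpTerrain V)
    (hle : ∀ v, T.low v ≤ T.high v) (S : Set V) (hS : T.ImpreciseMin S) :
    (∃ p, T.IsProxy S p) ∧
      ∀ s ∈ S, (∀ t ∈ T.Nbhd S, T.high s < T.low t) → T.IsProxy S s := by
  constructor
  · obtain ⟨v, hvS, hv⟩ := StmtAux.main_exists T hle S hS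
    exact ⟨v, StmtAux.proxy_of T S v hvS hv⟩
  · intro s hs hcond
    exact StmtAux.proxy_of T S s hs hcond
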